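/- Let N ≥ 1 and let b₀ and b be positive definite Hermitian N×N complex matrices. For t ∈ [0,1] set b_t = (1-t) b₀ + t b, which is positive definite and hence invertible for every t ∈ [0,1]. Suppose q : ℝ → M_N(ℂ) is differentiable on [0,1] with q(0) = Id and q'(t) = ½ q(t) b_t^{-1} (b - b₀) for all t ∈ [0,1]. Then q(t)* b₀ q(t) = b_t for all t ∈ [0,1]; in particular q(1) is invertible and b = q(1)* b₀ q(1). -/

import Mathlib

attribute [local instance] Matrix.normedAddCommGroup Matrix.normedSpace

open Matrix
open scoped ComplexOrder

section MatTop

@[reducible] noncomputable def matTop (N : ℕ) : TopologicalSpace (Matrix (Fin N) (Fin N) ℂ) :=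
  Matrix.normedAddCommGroup.toUniformSpace.toTopologicalSpace

theorem matTop_cm (N : ℕ) : @ContinuousMul (Matrix (Fin N) (Fin N) ℂ) (matTop N) _ := by
  exact ⟨(continuous_mul : Continuous fun p : Matrix (Fin N) (Fin N) ℂ × Matrix (Fin N) (Fin N) ℂ => p.1 * p.2)⟩

attribute [local instance] matTop matTop_cm

noncomputable def mulCLM (N : ℕ) : Matrix (Fin N) (Fin N) ℂ →L[ℝ] Matrix (Fin N) (Fin N) ℂ →L[ℝ] Matrix (Fin N) (Fin N) ℂ :=
  LinearMap.toContinuousLinearMap <|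
  { toFun := fun a => LinearMap.toContinuousLinearMap
      { toFun := fun x => a * x
        map_add' := fun x y => mul_add a x y
        map_smul' := fun c x => (mul_smul_comm c a x) }
    map_add' := by intro a a'; ext x; simp [add_mul]
    map_smul' := by intro c a; ext x; simp [smul_mul_assoc] }

@[simp] lemma mulCLM_apply {N : ℕ} (a x : Matrix (Fin N) (Fin N) ℂ) : mulCLM N a x = a * x := rfl

lemma HasDerivWithinAt.matmul {N : ℕ} {u v : ℝ → Matrix (Fin N) (Fin N) ℂ}
    {u' v' : Matrix (Fin N) (Fin N) ℂ} {s : Set ℝ} {t : ℝ}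
    (hu : HasDerivWithinAt u u' s t) (hv : HasDerivWithinAt v v' s t) :
    HasDerivWithinAt (fun t => u t * v t) (u' * v t + u t * v') s t := by
  have hc : HasDerivWithinAt (fun t => mulCLM N (u t)) (mulCLM N u') s t :=
    ((mulCLM N).hasFDerivAt.comp_hasDerivWithinAt t hu)
  simpa using hc.clm_apply hv

lemma posdef_interp {N : ℕ} {b₀ b : Matrix (Fin N) (Fin N) ℂ} (hb₀ : b₀.PosDef) (hb : b.PosDef)
    {t : ℝ} (ht : t ∈ Set.Icc (0:ℝ) 1) :
    (((1 - t : ℝ) : ℂ) • b₀ + ((t : ℝ) : ℂ) • b).PosDef := by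
  refine Matrix.PosDef.of_dotProduct_mulVec_pos ?_ ?_
  · have h1 : (((1 - t : ℝ) : ℂ) • b₀).IsHermitian := by
      unfold Matrix.IsHermitian
      rw [conjTranspose_smul, hb₀.1]; simp
    have h2 : (((t : ℝ) : ℂ) • b).IsHermitian := by
      unfold Matrix.IsHermitian
      rw [conjTranspose_smul, hb.1]; simp
    exact h1.add h2
  · intro x hx
    have e := hb₀.dotProduct_mulVec_pos hx
    have e' := hb.dotProduct_mulVec_pos hx
    rw [add_mulVec, dotProduct_add, smul_mulVec, smul_mulVec,
      dotProduct_smul, dotProduct_smul]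
    rcases lt_or_eq_of_le ht.1 with h0 | h0
    · have h2 : (0:ℂ) < ((t:ℝ):ℂ) • (star x ⬝ᵥ b.mulVec x) := by
        rw [smul_eq_mul]; exact mul_pos (by exact_mod_cast h0) e'
      have h1 : (0:ℂ) ≤ ((1 - t:ℝ):ℂ) • (star x ⬝ᵥ b₀.mulVec x) := by
        rw [smul_eq_mul]
        exact mul_nonneg (by exact_mod_cast (sub_nonneg.mpr ht.2)) e.le
      exact add_pos_of_nonneg_of_pos h1 h2
    · have h1 : (0:ℂ) < ((1 - t:ℝ):ℂ) • (star x ⬝ᵥ b₀.mulVec x) := by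
        rw [smul_eq_mul]
        refine mul_pos ?_ e
        rw [← h0]; norm_num
      have h2 : (0:ℂ) ≤ ((t:ℝ):ℂ) • (star x ⬝ᵥ b.mulVec x) := by
        rw [smul_eq_mul]
        exact mul_nonneg (by exact_mod_cast ht.1) e'.le
      exact add_pos_of_pos_of_nonneg h1 h2

end MatTop

theorem stmt13 (N : ℕ) (hN : 1 ≤ N)
    (b₀ b : Matrix (Fin N) (Fin N) ℂ) (hb₀ : b₀.PosDef) (hb : b.PosDef)
    -- the interpolated inner products `b_t = (1-t) b₀ + t b`
    (bt : ℝ → Matrix (Fin N) (Fin N) ℂ)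
    (hbt : bt = fun t => ((1 - t : ℝ) : ℂ) • b₀ + ((t : ℝ) : ℂ) • b)
    -- `q` is differentiable on `[0,1]` with `q(0) = Id` and
    -- `q'(t) = ½ q(t) b_t⁻¹ (b - b₀)`
    (q : ℝ → Matrix (Fin N) (Fin N) ℂ) (hq0 : q 0 = 1)
    (hq' : ∀ t ∈ Set.Icc (0 : ℝ) 1,
      HasDerivWithinAt q (((1 : ℂ) / 2) • (q t * (bt t)⁻¹ * (b - b₀)))
        (Set.Icc (0 : ℝ) 1) t) :
    -- `b_t` is positive definite, hence invertible, for all `t ∈ [0,1]`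
    (∀ t ∈ Set.Icc (0 : ℝ) 1, (bt t).PosDef ∧ IsUnit (bt t)) ∧
    -- `q(t)* b₀ q(t) = b_t` on `[0,1]`, and in particular `b = q(1)* b₀ q(1)`
    (∀ t ∈ Set.Icc (0 : ℝ) 1, (q t)ᴴ * b₀ * q t = bt t) ∧
    IsUnit (q 1) ∧ b = (q 1)ᴴ * b₀ * q 1 := by
  letI := matTop N
  haveI := matTop_cm N
  replace hq' : ∀ t ∈ Set.Icc (0 : ℝ) 1,
      HasDerivWithinAt q (((1 : ℂ) / 2) • (q t * (bt t)⁻¹ * (b - b₀))) (Set.Icc (0 : ℝ) 1) t := hq'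
  have hpos : ∀ t ∈ Set.Icc (0:ℝ) 1, (bt t).PosDef := by
    intro t ht; rw [hbt]; exact posdef_interp hb₀ hb ht
  have hdet : ∀ t ∈ Set.Icc (0:ℝ) 1, IsUnit (bt t).det :=
    fun t ht => (Matrix.isUnit_iff_isUnit_det _).1 (hpos t ht).isUnit
  -- continuity of `bt`
  have hbtc : Continuous bt := by
    rw [hbt]
    exact ((Complex.continuous_ofReal.comp (continuous_const.sub continuous_id)).smul
      continuous_const).add
      ((Complex.continuous_ofReal.comp continuous_id).smul continuous_const)
  -- continuity of the inverse
  have hinvc : ContinuousOn (fun t => (bt t)⁻¹) (Set.Icc (0:ℝ) 1) := by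
    have h1 : ContinuousOn (fun t => ((bt t).det)⁻¹ • (bt t).adjugate) (Set.Icc (0:ℝ) 1) :=
      ((hbtc.matrix_det.continuousOn).inv₀
        (fun t ht => (hdet t ht).ne_zero)).smul (hbtc.matrix_adjugate.continuousOn)
    refine h1.congr fun t ht => ?_
    rw [Matrix.inv_def, Ring.inverse_eq_inv]
  -- clamping of time to [0,1]
  set τ : ℝ → ℝ := fun t => max 0 (min t 1) with hτdef
  have hτmem : ∀ t, τ t ∈ Set.Icc (0:ℝ) 1 := by
    intro t
    exact ⟨le_max_left _ _, max_le (by norm_num) (min_le_right _ _)⟩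
  have hτeq : ∀ t ∈ Set.Icc (0:ℝ) 1, τ t = t := by
    intro t ht
    simp [hτdef, min_eq_left ht.2, max_eq_right ht.1]
  -- the linear vector field
  set L : ℝ → (Matrix (Fin N) (Fin N) ℂ →L[ℝ] Matrix (Fin N) (Fin N) ℂ) :=
    fun u => ((1:ℂ)/2) • (mulCLM N ((b - b₀) * (bt u)⁻¹) + (mulCLM N).flip ((bt u)⁻¹ * (b - b₀)))
    with hL
  have hLapp : ∀ u x, L u x
      = ((1:ℂ)/2) • ((b - b₀) * (bt u)⁻¹ * x + x * ((bt u)⁻¹ * (b - b₀))) := by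
    intro u x
    simp [hL]
  -- uniform Lipschitz bound
  have hA : ContinuousOn (fun t => (b - b₀) * (bt t)⁻¹) (Set.Icc (0:ℝ) 1) :=
    continuousOn_const.mul hinvc
  have hA' : ContinuousOn (fun t => (bt t)⁻¹ * (b - b₀)) (Set.Icc (0:ℝ) 1) :=
    hinvc.mul continuousOn_const
  have hLc : ContinuousOn L (Set.Icc (0:ℝ) 1) :=
    (((mulCLM N).continuous.comp_continuousOn hA).add
      ((mulCLM N).flip.continuous.comp_continuousOn hA')).const_smul ((1:ℂ)/2)
  obtain ⟨C, hC⟩ := isCompact_Icc.exists_bound_of_continuousOn hLc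
  have hlip : ∀ t : ℝ, LipschitzOnWith C.toNNReal (fun x => L (τ t) x) Set.univ := by
    intro t
    refine ((L (τ t)).lipschitz.weaken ?_).lipschitzOnWith
    rw [← norm_toNNReal]
    exact Real.toNNReal_mono (hC (τ t) (hτmem t))
  -- continuity of the two candidate solutions
  have hqc : ContinuousOn q (Set.Icc (0:ℝ) 1) :=
    fun t ht => (hq' t ht).continuousWithinAt
  have hfc : ContinuousOn (fun t => (q t)ᴴ * b₀ * q t) (Set.Icc (0:ℝ) 1) :=
    (hqc.star.mul continuousOn_const).mul hqc
  -- derivative of `f`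
  have hf' : ∀ t ∈ Set.Ico (0:ℝ) 1,
      HasDerivWithinAt (fun t => (q t)ᴴ * b₀ * q t) (L (τ t) ((q t)ᴴ * b₀ * q t))
        (Set.Ici t) t := by
    intro t ht
    have ht' := Set.Ico_subset_Icc_self ht
    have hd := hq' t ht'
    have h1 := (hd.star.matmul (hasDerivWithinAt_const t _ b₀)).matmul hd
    have hmem : Set.Icc (0:ℝ) 1 ∈ nhdsWithin t (Set.Ici t) := Icc_mem_nhdsGE_of_mem ht
    refine (h1.mono_of_mem_nhdsWithin hmem).congr_deriv ?_
    have hinvH : ((bt t)⁻¹)ᴴ = (bt t)⁻¹ := by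
      rw [conjTranspose_nonsing_inv, (hpos t ht').1]
    have hDstar : (((1:ℂ)/2) • (q t * (bt t)⁻¹ * (b - b₀)))ᴴ
        = ((1:ℂ)/2) • ((b - b₀) * ((bt t)⁻¹ * (q t)ᴴ)) := by
      rw [conjTranspose_smul, conjTranspose_mul, conjTranspose_mul, hinvH,
        conjTranspose_sub, hb.1, hb₀.1]
      simp
    rw [hτeq t ht', hLapp]
    simp only [Matrix.star_eq_conjTranspose]
    rw [hDstar]
    simp only [mul_zero, add_zero, smul_mul_assoc, mul_smul_comm, smul_add, mul_assoc]
  -- derivative of `bt`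
  have hg0 : ∀ t, ∀ s : Set ℝ, HasDerivWithinAt bt (b - b₀) s t := by
    intro t s
    rw [hbt]
    have hr1 : HasDerivWithinAt (fun u : ℝ => (1 - u : ℝ)) (-1) s t :=
      (hasDerivWithinAt_id t s).const_sub 1
    have h1 : HasDerivWithinAt (fun u : ℝ => ((1 - u : ℝ) : ℂ)) (-1) s t := by
      have h := Complex.ofRealCLM.hasFDerivAt.comp_hasDerivWithinAt t hr1
      simp only [Function.comp_def, Complex.ofRealCLM_apply, Complex.ofReal_neg,
        Complex.ofReal_one] at h
      exact h
    have h2 : HasDerivWithinAt (fun u : ℝ => ((u : ℝ) : ℂ)) 1 s t := by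
      have h := Complex.ofRealCLM.hasFDerivAt.comp_hasDerivWithinAt t (hasDerivWithinAt_id t s)
      simp only [Function.comp_def, Complex.ofRealCLM_apply, Complex.ofReal_one] at h
      exact h
    have := (h1.smul_const b₀).add (h2.smul_const b)
    refine this.congr_deriv ?_
    simp [sub_eq_add_neg, add_comm]
  have hg' : ∀ t ∈ Set.Ico (0:ℝ) 1,
      HasDerivWithinAt bt (L (τ t) (bt t)) (Set.Ici t) t := by
    intro t ht
    have ht' := Set.Ico_subset_Icc_self ht
    refine (hg0 t (Set.Ici t)).congr_deriv ?_
    rw [hτeq t ht', hLapp]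
    rw [mul_assoc (b - b₀), nonsing_inv_mul _ (hdet t ht'), ← mul_assoc (bt t),
      mul_nonsing_inv _ (hdet t ht'), mul_one, one_mul]
    rw [← two_smul ℂ, smul_smul]
    norm_num
  have ha : (q 0)ᴴ * b₀ * q 0 = bt 0 := by
    rw [hq0, hbt]
    simp
  have key : Set.EqOn (fun t => (q t)ᴴ * b₀ * q t) bt (Set.Icc (0:ℝ) 1) :=
    ODE_solution_unique_of_mem_Icc_right (v := fun t x => L (τ t) x)
      (s := fun _ => Set.univ) (fun t _ => hlip t) hfc hf' (fun _ _ => Set.mem_univ _)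
      (hbtc.continuousOn) hg' (fun _ _ => Set.mem_univ _) ha
  have hbt1 : bt 1 = b := by rw [hbt]; simp
  have hbq1 : (q 1)ᴴ * b₀ * q 1 = b := (key (by norm_num)).trans hbt1
  have hq1 : IsUnit (q 1) := by
    have hub : IsUnit ((q 1)ᴴ * b₀ * q 1) := hbq1 ▸ hb.isUnit
    rw [Matrix.isUnit_iff_isUnit_det, Matrix.det_mul, Matrix.det_mul] at hub
    exact (Matrix.isUnit_iff_isUnit_det _).2 (IsUnit.mul_iff.1 hub).2
  exact ⟨fun t ht => ⟨hpos t ht, (hpos t ht).isUnit⟩, fun t ht => key ht, hq1, hbq1.symm⟩
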